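/- Suppose σ and σ̃ are k-simplices in ℝ^m with |‖pᵢ − pⱼ‖ − ‖p̃ᵢ − p̃ⱼ‖| ≤ ξ₀·L(σ) for all i < j. Let P, P̃ be the matrices of edge vectors from p₀ and p̃₀. If ξ₀ ≤ (η·t(σ)/2)² with η² ≤ 1, then s_k(P̃) ≥ (1 − η²)·s_k(P), and t(σ̃)·L(σ̃) ≥ (1 − η²)·t(σ)·L(σ)/√k, and t(σ̃) ≥ (4/(5√k))·(1 − η²)·t(σ). -/

import Mathlib

open Matrix Metric
open scoped Classical BigOperators

noncomputable section

/-- Euclidean space ℝ^m. -/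
abbrev E (m : ℕ) := EuclideanSpace ℝ (Fin m)

/-- Euclidean norm of a plain vector. -/
noncomputable def euclNorm {n : ℕ} (v : Fin n → ℝ) : ℝ := Real.sqrt (∑ i, v i ^ 2)

/-- Largest singular value (operator norm) of a matrix. -/
noncomputable def largeSV {m k : ℕ} (P : Matrix (Fin m) (Fin k) ℝ) : ℝ :=
  ⨆ x : {x : Fin k → ℝ // euclNorm x = 1}, euclNorm (P.mulVec x)

/-- Smallest singular value of a matrix. -/
noncomputable def smallSV {m k : ℕ} (P : Matrix (Fin m) (Fin k) ℝ) : ℝ :=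
  ⨅ x : {x : Fin k → ℝ // euclNorm x = 1}, euclNorm (P.mulVec x)

/-- Matrix of edge vectors pᵢ − p₀ of a k-simplex. -/
noncomputable def vertMatrix {m k : ℕ} (p : Fin (k+1) → E m) : Matrix (Fin m) (Fin k) ℝ :=
  fun a j => p j.succ a - p 0 a

/-- Pseudo-inverse (PᵀP)⁻¹Pᵀ of a matrix of full column rank. -/
noncomputable def pseudoInv {m k : ℕ} (P : Matrix (Fin m) (Fin k) ℝ) :
    Matrix (Fin k) (Fin m) ℝ := (Pᵀ * P)⁻¹ * Pᵀ

/-- Longest edge length of a simplex given by its vertices. -/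
noncomputable def longEdge {m k : ℕ} (p : Fin (k+1) → E m) : ℝ :=
  ⨆ i, ⨆ j, dist (p i) (p j)

/-- Altitude of vertex i: distance to affine hull of the opposite facet. -/
noncomputable def altitude {m k : ℕ} (p : Fin (k+1) → E m) (i : Fin (k+1)) : ℝ :=
  Metric.infDist (p i) (↑(affineSpan ℝ (p '' {j | j ≠ i})) : Set (E m))

/-- Thickness of a k-simplex: 1 if k = 0, else min altitude / (k · longest edge). -/
noncomputable def thickness {m k : ℕ} (p : Fin (k+1) → E m) : ℝ :=
  if k = 0 then 1 else (⨅ i, altitude p i) / (k * longEdge p)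

/-- Longest edge of a finite vertex set. -/
noncomputable def fLongEdge {m : ℕ} (s : Finset (E m)) : ℝ := Metric.diam (s : Set (E m))

/-- Minimal altitude of a finite vertex set. -/
noncomputable def fMinAlt {m : ℕ} (s : Finset (E m)) : ℝ :=
  ⨅ p : {p // p ∈ s},
    Metric.infDist (p : E m) (↑(affineSpan ℝ ((s.erase (p : E m)) : Set (E m))) : Set (E m))

/-- Thickness of a simplex given as a finite vertex set. -/
noncomputable def fThickness {m : ℕ} (s : Finset (E m)) : ℝ :=
  if s.card ≤ 1 then 1 else fMinAlt s / ((s.card - 1 : ℕ) * fLongEdge s)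

/-- A simplex (finite vertex set) is Γ₀-good if every j-face has thickness ≥ Γ₀^j. -/
def isGood {m : ℕ} (Γ₀ : ℝ) (s : Finset (E m)) : Prop :=
  ∀ t ⊆ s, t.Nonempty → fThickness t ≥ Γ₀ ^ (t.card - 1)

/-- A Γ₀-flake: not Γ₀-good, but every facet is Γ₀-good. -/
def isFlake {m : ℕ} (Γ₀ : ℝ) (s : Finset (E m)) : Prop :=
  ¬ isGood Γ₀ s ∧ ∀ p ∈ s, isGood Γ₀ (s.erase p)

-- basics
lemma euclNorm_nonneg {n : ℕ} (v : Fin n → ℝ) : 0 ≤ euclNorm v := Real.sqrt_nonneg _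

lemma euclNorm_sq {n : ℕ} (v : Fin n → ℝ) : euclNorm v ^ 2 = ∑ i, v i ^ 2 := by
  rw [euclNorm, Real.sq_sqrt]
  exact Finset.sum_nonneg fun i _ => sq_nonneg _

lemma dist_E {m : ℕ} (x y : E m) : dist x y = euclNorm (fun a => x a - y a) := by
  rw [EuclideanSpace.dist_eq, euclNorm]
  congr 1
  exact Finset.sum_congr rfl fun a _ => by rw [Real.dist_eq, sq_abs]

lemma euclNorm_smul {n : ℕ} (c : ℝ) (v : Fin n → ℝ) :
    euclNorm (fun i => c * v i) = |c| * euclNorm v := by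
  rw [euclNorm, euclNorm, ← Real.sqrt_sq_eq_abs, ← Real.sqrt_mul (sq_nonneg c), Finset.mul_sum]
  congr 1
  exact Finset.sum_congr rfl fun i _ => by ring

lemma dist_le_longEdge {m k : ℕ} (p : Fin (k+1) → E m) (i j : Fin (k+1)) :
    dist (p i) (p j) ≤ longEdge p := by
  have h1 : dist (p i) (p j) ≤ ⨆ j, dist (p i) (p j) :=
    le_ciSup (f := fun j => dist (p i) (p j)) (Set.Finite.bddAbove (Set.finite_range _)) j
  exact h1.trans (le_ciSup (f := fun i => ⨆ j, dist (p i) (p j))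
    (Set.Finite.bddAbove (Set.finite_range _)) i)

lemma longEdge_nonneg {m k : ℕ} (p : Fin (k+1) → E m) : 0 ≤ longEdge p := by
  have := dist_le_longEdge p 0 0
  simpa using this

lemma longEdge_le {m k : ℕ} (p : Fin (k+1) → E m) {c : ℝ}
    (hc : ∀ i j, dist (p i) (p j) ≤ c) : longEdge p ≤ c :=
  ciSup_le fun i => ciSup_le fun j => hc i j

lemma altitude_nonneg {m k : ℕ} (p : Fin (k+1) → E m) (i : Fin (k+1)) :
    0 ≤ altitude p i := infDist_nonneg

lemma minalt_le {m k : ℕ} (p : Fin (k+1) → E m) (i : Fin (k+1)) :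
    (⨅ i, altitude p i) ≤ altitude p i :=
  ciInf_le ⟨0, by rintro r ⟨i, rfl⟩; exact altitude_nonneg p i⟩ i

lemma minalt_nonneg {m k : ℕ} (p : Fin (k+1) → E m) : 0 ≤ ⨅ i, altitude p i :=
  le_ciInf fun i => altitude_nonneg p i

section ThickFacts
variable {m k : ℕ} (p : Fin (k+1) → E m)

lemma kL_ne (hk : k ≠ 0) (hnd : 0 < thickness p) : (k : ℝ) * longEdge p ≠ 0 := by
  intro h0
  rw [thickness, if_neg hk, h0, div_zero] at hnd
  exact lt_irrefl 0 hnd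

lemma longEdge_pos (hk : k ≠ 0) (hnd : 0 < thickness p) : 0 < longEdge p := by
  rcases lt_or_eq_of_le (longEdge_nonneg p) with h | h
  · exact h
  · exact absurd (by rw [← h, mul_zero]) (kL_ne p hk hnd)

lemma minalt_eq (hk : k ≠ 0) (hnd : 0 < thickness p) :
    (⨅ i, altitude p i) = thickness p * ((k : ℝ) * longEdge p) := by
  rw [thickness, if_neg hk, div_mul_cancel₀ _ (kL_ne p hk hnd)]

lemma one_lt_card (hk : k ≠ 0) : (1 : ℕ) < k + 1 := by omega

lemma thickness_le_one (hk : k ≠ 0) (hnd : 0 < thickness p) : thickness p ≤ 1 := by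
  have hL := longEdge_pos p hk hnd
  have hkL : (0:ℝ) < (k : ℝ) * longEdge p := by
    have : (0:ℝ) < (k:ℝ) := by exact_mod_cast Nat.pos_of_ne_zero hk
    positivity
  rw [thickness, if_neg hk, div_le_one hkL]
  set j1 : Fin (k+1) := ⟨1, one_lt_card hk⟩ with hj1
  have hne : j1 ≠ 0 := by
    intro hc
    have : (1:ℕ) = 0 := congrArg Fin.val hc
    omega
  have h1 : altitude p 0 ≤ dist (p 0) (p j1) := by
    apply infDist_le_dist_of_mem
    exact subset_affineSpan ℝ _ ⟨j1, hne, rfl⟩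
  have h2 : dist (p 0) (p j1) ≤ longEdge p := dist_le_longEdge p 0 j1
  have h3 : longEdge p ≤ (k:ℝ) * longEdge p := by
    nlinarith [hL, show (1:ℝ) ≤ (k:ℝ) by exact_mod_cast Nat.one_le_iff_ne_zero.mpr hk]
  exact le_trans (minalt_le p 0) (by linarith)

lemma minalt_pos (hk : k ≠ 0) (hnd : 0 < thickness p) : 0 < ⨅ i, altitude p i := by
  rw [minalt_eq p hk hnd]
  have : (0:ℝ) < (k:ℝ) := by exact_mod_cast Nat.pos_of_ne_zero hk
  have := longEdge_pos p hk hnd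
  positivity

end ThickFacts

noncomputable def gram {m k : ℕ} (p : Fin (k+1) → E m) : Matrix (Fin k) (Fin k) ℝ :=
  fun j l => ∑ a, vertMatrix p a j * vertMatrix p a l

lemma normsq_mulVec {m k : ℕ} (p : Fin (k+1) → E m) (x : Fin k → ℝ) :
    euclNorm ((vertMatrix p).mulVec x) ^ 2 = ∑ j, ∑ l, x j * x l * gram p j l := by
  rw [euclNorm_sq]
  have h1 : ∀ a, ((vertMatrix p).mulVec x a) ^ 2
      = ∑ j, ∑ l, (x j * x l) * (vertMatrix p a j * vertMatrix p a l) := by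
    intro a
    rw [Matrix.mulVec, dotProduct, sq, Finset.sum_mul_sum]
    exact Finset.sum_congr rfl fun j _ => Finset.sum_congr rfl fun l _ => by ring
  rw [Finset.sum_congr rfl fun a _ => h1 a, Finset.sum_comm]
  refine Finset.sum_congr rfl fun j _ => ?_
  rw [Finset.sum_comm]
  simp only [_root_.gram]
  simp_rw [Finset.mul_sum]

lemma gram_eq_dist {m k : ℕ} (p : Fin (k+1) → E m) (j l : Fin k) :
    gram p j l = (dist (p j.succ) (p 0) ^ 2 + dist (p l.succ) (p 0) ^ 2
      - dist (p j.succ) (p l.succ) ^ 2) / 2 := by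
  have e1 : dist (p j.succ) (p 0) ^ 2 = ∑ a, (p j.succ a - p 0 a)^2 := by
    rw [dist_E, euclNorm_sq]
  have e2 : dist (p l.succ) (p 0) ^ 2 = ∑ a, (p l.succ a - p 0 a)^2 := by
    rw [dist_E, euclNorm_sq]
  have e3 : dist (p j.succ) (p l.succ) ^ 2 = ∑ a, (p j.succ a - p l.succ a)^2 := by
    rw [dist_E, euclNorm_sq]
  rw [e1, e2, e3, _root_.gram]
  rw [← Finset.sum_add_distrib, ← Finset.sum_sub_distrib, Finset.sum_div]
  refine Finset.sum_congr rfl fun a _ => ?_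
  simp only [vertMatrix]
  ring

lemma factB {m k : ℕ} (hk : k ≠ 0) (p : Fin (k+1) → E m) (hnd : 0 < thickness p)
    (x : Fin k → ℝ) :
    Real.sqrt k * thickness p * longEdge p * euclNorm x
      ≤ euclNorm ((vertMatrix p).mulVec x) := by
  haveI : Nonempty (Fin k) := ⟨⟨0, Nat.pos_of_ne_zero hk⟩⟩
  obtain ⟨i, hi⟩ := Finite.exists_max (fun j => |x j|)
  by_cases hxi : x i = 0
  · have hx0 : ∀ j, x j = 0 := fun j =>
      abs_nonpos_iff.mp (by simpa [hxi] using hi j)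
    have hx : euclNorm x = 0 := by simp [euclNorm, hx0]
    rw [hx, mul_zero]
    exact euclNorm_nonneg _
  have habs : 0 < |x i| := abs_pos.mpr hxi
  set T := thickness p with hTdef
  set L := longEdge p with hLdef
  have hT : 0 < T := hnd
  have hL : 0 < L := longEdge_pos p hk hnd
  set c : Fin (k+1) → ℝ :=
    Fin.cases ((∑ l, x l) / x i) (fun l => (if l = i then (1:ℝ) else 0) - x l / x i) with hc
  have hsum : ∑ j, c j = 1 := by
    rw [Fin.sum_univ_succ]
    simp only [hc, Fin.cases_zero, Fin.cases_succ]
    rw [Finset.sum_sub_distrib, Finset.sum_ite_eq' Finset.univ i (fun _ => (1:ℝ)),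
      if_pos (Finset.mem_univ i), ← Finset.sum_div]
    field_simp
    ring
  have hci : c i.succ = 0 := by
    simp only [hc, Fin.cases_succ, if_pos rfl]
    simp [div_self hxi]
  have hsub : ∑ j : {j : Fin (k+1) // j ≠ i.succ}, c (j : Fin (k+1)) = 1 := by
    rw [← Finset.sum_subtype (Finset.univ.erase i.succ)
      (by intro j; simp) (fun j => c j)]
    have := Finset.sum_erase_add Finset.univ c (Finset.mem_univ i.succ)
    rw [hci, add_zero] at this
    rw [this, hsum]
  set y : E m := ∑ j, c j • p j with hy
  have hmem : y ∈ affineSpan ℝ (p '' {j | j ≠ i.succ}) := by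
    rw [Set.image_eq_range]
    have h2 := affineCombination_mem_affineSpan (k := ℝ)
      (w := fun j : {j : Fin (k+1) // j ≠ i.succ} => c (j : Fin (k+1)))
      (s := Finset.univ) hsub (fun j : {j : Fin (k+1) // j ≠ i.succ} => p (j : Fin (k+1)))
    rw [Finset.affineCombination_eq_linear_combination _ _ _ hsub] at h2
    have hyy : y = ∑ j : {j : Fin (k+1) // j ≠ i.succ}, c (j : Fin (k+1)) • p (j : Fin (k+1)) := by
      rw [← Finset.sum_subtype (Finset.univ.erase i.succ)
        (by intro j; simp) (fun j => c j • p j)]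
      have := Finset.sum_erase_add Finset.univ (fun j => c j • p j) (Finset.mem_univ i.succ)
      simp only [hci, zero_smul, add_zero] at this
      rw [hy, ← this]
    rw [hyy]
    exact h2
  have hya : ∀ a, y a = ∑ j, c j * p j a := by
    intro a
    have h1 : (∑ j, c j • p j) a = ∑ j, (c j • p j) a := by
      rw [WithLp.ofLp_sum, Finset.sum_apply]
    rw [hy, h1]
    rfl
  have hyx : ∀ a, p i.succ a - y a = (x i)⁻¹ * ((vertMatrix p).mulVec x a) := by
    intro a
    rw [hya a, Fin.sum_univ_succ]
    simp only [hc, Fin.cases_zero, Fin.cases_succ, Matrix.mulVec, dotProduct, vertMatrix]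
    rw [Finset.mul_sum]
    simp only [sub_mul]
    rw [Finset.sum_sub_distrib]
    simp only [ite_mul, one_mul, zero_mul]
    rw [Finset.sum_ite_eq' Finset.univ i (fun l => p l.succ a), if_pos (Finset.mem_univ i)]
    have hrw : ∀ l : Fin k, (x i)⁻¹ * (p l.succ a * x l - p 0 a * x l)
        = x l / x i * p l.succ a - x l / x i * p 0 a := fun l => by ring
    rw [Finset.sum_congr rfl fun l _ => hrw l, Finset.sum_sub_distrib,
      Finset.sum_div, Finset.sum_mul]
    ring
  have hdisty : dist (p i.succ) y = |x i|⁻¹ * euclNorm ((vertMatrix p).mulVec x) := by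
    rw [dist_E]
    have : (fun a => p i.succ a - y a)
        = fun a => (x i)⁻¹ * ((vertMatrix p).mulVec x a) := funext hyx
    rw [this, euclNorm_smul, abs_inv]
  have h5 : T * ((k : ℝ) * L) ≤ |x i|⁻¹ * euclNorm ((vertMatrix p).mulVec x) := by
    rw [← minalt_eq p hk hnd, ← hdisty]
    exact (minalt_le p i.succ).trans (infDist_le_dist_of_mem hmem)
  have h6 : |x i| * (T * ((k:ℝ) * L)) ≤ euclNorm ((vertMatrix p).mulVec x) := by
    calc |x i| * (T * ((k:ℝ) * L))
        ≤ |x i| * (|x i|⁻¹ * euclNorm ((vertMatrix p).mulVec x)) :=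
          mul_le_mul_of_nonneg_left h5 habs.le
      _ = euclNorm ((vertMatrix p).mulVec x) := by
          rw [← mul_assoc, mul_inv_cancel₀ (abs_ne_zero.mpr hxi), one_mul]
  have hnb : euclNorm x ≤ Real.sqrt k * |x i| := by
    have hs : ∑ j, x j ^ 2 ≤ (k:ℝ) * x i ^ 2 := by
      calc ∑ j, x j ^ 2 ≤ ∑ _j : Fin k, x i ^ 2 := by
            refine Finset.sum_le_sum fun j _ => ?_
            rw [← sq_abs (x j), ← sq_abs (x i)]
            exact pow_le_pow_left₀ (abs_nonneg _) (hi j) 2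
        _ = (k:ℝ) * x i ^ 2 := by
            rw [Finset.sum_const, Finset.card_univ, Fintype.card_fin, nsmul_eq_mul]
    calc euclNorm x ≤ Real.sqrt ((k:ℝ) * x i ^ 2) := Real.sqrt_le_sqrt hs
      _ = Real.sqrt k * |x i| := by
          rw [Real.sqrt_mul (by positivity), Real.sqrt_sq_eq_abs]
  calc Real.sqrt k * T * L * euclNorm x
      ≤ Real.sqrt k * T * L * (Real.sqrt k * |x i|) := by
        have hsk : 0 < Real.sqrt k * T * L := by
          have : (0:ℝ) < Real.sqrt k := Real.sqrt_pos.mpr (by exact_mod_cast Nat.pos_of_ne_zero hk)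
          positivity
        exact mul_le_mul_of_nonneg_left hnb (le_of_lt hsk)
    _ = |x i| * (T * ((Real.sqrt k * Real.sqrt k) * L)) := by ring
    _ = |x i| * (T * ((k:ℝ) * L)) := by
        rw [Real.mul_self_sqrt (by positivity)]
    _ ≤ euclNorm ((vertMatrix p).mulVec x) := h6

lemma pert {m k : ℕ} (p q : Fin (k+1) → E m) (ξ₀ : ℝ) (hξ0 : 0 ≤ ξ₀)
    (hξ1 : ξ₀ ≤ 1/4) (hL0 : 0 ≤ longEdge p)
    (h' : ∀ i j, |dist (p i) (p j) - dist (q i) (q j)| ≤ ξ₀ * longEdge p)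
    (x : Fin k → ℝ) :
    euclNorm ((vertMatrix p).mulVec x) ^ 2
      - 4 * k * ξ₀ * longEdge p ^ 2 * euclNorm x ^ 2
      ≤ euclNorm ((vertMatrix q).mulVec x) ^ 2 := by
  set L := longEdge p with hLdef
  have distsq : ∀ i j, |dist (q i) (q j) ^ 2 - dist (p i) (p j) ^ 2|
      ≤ (9/4) * ξ₀ * L ^ 2 := by
    intro i j
    set d := dist (p i) (p j) with hd
    set d' := dist (q i) (q j) with hd'
    have hb1 : |d' - d| ≤ ξ₀ * L := by rw [abs_sub_comm]; exact h' i j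
    have hdL : d ≤ L := dist_le_longEdge p i j
    have hd0 : 0 ≤ d := dist_nonneg
    have hd'0 : 0 ≤ d' := dist_nonneg
    have hd'le : d' ≤ d + ξ₀ * L := by
      have := (abs_le.mp hb1).2; linarith
    have e : d' ^ 2 - d ^ 2 = (d' - d) * (d' + d) := by ring
    rw [e, abs_mul]
    have hb2 : |d' + d| ≤ (2 + ξ₀) * L := by
      rw [abs_of_nonneg (by linarith)]
      nlinarith
    calc |d' - d| * |d' + d| ≤ (ξ₀ * L) * ((2 + ξ₀) * L) :=
          mul_le_mul hb1 hb2 (abs_nonneg _) (by positivity)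
      _ ≤ (9/4) * ξ₀ * L ^ 2 := by
          nlinarith [mul_nonneg (mul_nonneg (by linarith : (0:ℝ) ≤ 1/4 - ξ₀) hξ0)
            (sq_nonneg L)]
  have gbound : ∀ j l : Fin k, |gram q j l - gram p j l| ≤ 4 * ξ₀ * L ^ 2 := by
    intro j l
    rw [gram_eq_dist, gram_eq_dist]
    have h1 := abs_le.mp (distsq j.succ 0)
    have h2 := abs_le.mp (distsq l.succ 0)
    have h3 := abs_le.mp (distsq j.succ l.succ)
    have hLL : 0 ≤ ξ₀ * L ^ 2 := by positivity
    rw [abs_le]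
    constructor <;> [nlinarith; nlinarith]
  set B := 4 * ξ₀ * L ^ 2 with hB
  have hB0 : 0 ≤ B := by positivity
  have quad : |∑ j, ∑ l, x j * x l * (gram q j l - gram p j l)|
      ≤ 4 * k * ξ₀ * L ^ 2 * euclNorm x ^ 2 := by
    have step1 : |∑ j, ∑ l, x j * x l * (gram q j l - gram p j l)|
        ≤ ∑ j, ∑ l, |x j| * |x l| * B := by
      refine (Finset.abs_sum_le_sum_abs _ _).trans (Finset.sum_le_sum fun j _ => ?_)
      refine (Finset.abs_sum_le_sum_abs _ _).trans (Finset.sum_le_sum fun l _ => ?_)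
      rw [abs_mul, abs_mul]
      exact mul_le_mul_of_nonneg_left (gbound j l) (by positivity)
    have step2 : ∑ j, ∑ l, |x j| * |x l| * B = (∑ j, |x j|) ^ 2 * B := by
      have e1 : ∀ j : Fin k, ∑ l, |x j| * |x l| * B = |x j| * (∑ l, |x l|) * B := by
        intro j
        rw [← Finset.sum_mul, ← Finset.mul_sum]
      rw [Finset.sum_congr rfl fun j _ => e1 j, ← Finset.sum_mul, ← Finset.sum_mul, sq]
    have step3 : (∑ j, |x j|) ^ 2 ≤ (k : ℝ) * euclNorm x ^ 2 := by
      have := sq_sum_le_card_mul_sum_sq (s := (Finset.univ : Finset (Fin k)))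
        (f := fun j => |x j|)
      rw [euclNorm_sq]
      have e2 : ∑ j, |x j| ^ 2 = ∑ j, x j ^ 2 :=
        Finset.sum_congr rfl fun j _ => sq_abs _
      rw [← e2]
      simpa [Finset.card_univ] using this
    calc |∑ j, ∑ l, x j * x l * (gram q j l - gram p j l)|
        ≤ (∑ j, |x j|) ^ 2 * B := by rw [← step2]; exact step1
      _ ≤ ((k : ℝ) * euclNorm x ^ 2) * B := mul_le_mul_of_nonneg_right step3 hB0
      _ = 4 * k * ξ₀ * L ^ 2 * euclNorm x ^ 2 := by rw [hB]; ring
  have split : ∑ j, ∑ l, x j * x l * gram q j l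
      = (∑ j, ∑ l, x j * x l * gram p j l)
        + ∑ j, ∑ l, x j * x l * (gram q j l - gram p j l) := by
    rw [← Finset.sum_add_distrib]
    refine Finset.sum_congr rfl fun j _ => ?_
    rw [← Finset.sum_add_distrib]
    exact Finset.sum_congr rfl fun l _ => by ring
  rw [normsq_mulVec, normsq_mulVec, split]
  have := neg_abs_le (∑ j, ∑ l, x j * x l * (gram q j l - gram p j l))
  linarith [quad]

lemma iSup_comp_equiv {ι ι' : Type*} [Nonempty ι] (e : ι' ≃ ι) (f : ι → ℝ) :
    ⨆ x, f (e x) = ⨆ y, f y := by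
  rw [iSup, iSup]
  congr 1
  exact e.surjective.range_comp f

lemma iInf_comp_equiv {ι ι' : Type*} [Nonempty ι] (e : ι' ≃ ι) (f : ι → ℝ) :
    ⨅ x, f (e x) = ⨅ y, f y := by
  rw [iInf, iInf]
  congr 1
  exact e.surjective.range_comp f

lemma longEdge_comp {m k : ℕ} (p : Fin (k+1) → E m) (π : Equiv.Perm (Fin (k+1))) :
    longEdge (p ∘ π) = longEdge p := by
  unfold longEdge
  have inner : ∀ i, (⨆ j, dist ((p ∘ π) i) ((p ∘ π) j)) = ⨆ j, dist (p (π i)) (p j) :=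
    fun i => iSup_comp_equiv π (fun j => dist (p (π i)) (p j))
  calc (⨆ i, ⨆ j, dist ((p ∘ π) i) ((p ∘ π) j))
      = ⨆ i, ⨆ j, dist (p (π i)) (p j) :=
        congrArg (fun g : Fin (k+1) → ℝ => ⨆ i, g i) (funext inner)
    _ = ⨆ i, ⨆ j, dist (p i) (p j) :=
        iSup_comp_equiv π (fun i => ⨆ j, dist (p i) (p j))

lemma altitude_comp {m k : ℕ} (p : Fin (k+1) → E m) (π : Equiv.Perm (Fin (k+1)))
    (i : Fin (k+1)) : altitude (p ∘ π) i = altitude p (π i) := by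
  unfold altitude
  have hset : (p ∘ π) '' {j | j ≠ i} = p '' {j | j ≠ π i} := by
    ext z
    constructor
    · rintro ⟨j, hj, rfl⟩
      exact ⟨π j, fun hc => hj (π.injective hc), rfl⟩
    · rintro ⟨l, hl, rfl⟩
      refine ⟨π.symm l, fun hc => hl ?_, by simp⟩
      rw [← π.apply_symm_apply l, hc]
  rw [hset]
  rfl

lemma minalt_comp {m k : ℕ} (p : Fin (k+1) → E m) (π : Equiv.Perm (Fin (k+1))) :
    (⨅ i, altitude (p ∘ π) i) = ⨅ i, altitude p i := by
  calc (⨅ i, altitude (p ∘ π) i) = ⨅ i, altitude p (π i) :=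
        congrArg (fun g : Fin (k+1) → ℝ => ⨅ i, g i) (funext (altitude_comp p π))
    _ = ⨅ i, altitude p i := iInf_comp_equiv π (fun i => altitude p i)

lemma thickness_comp {m k : ℕ} (p : Fin (k+1) → E m) (π : Equiv.Perm (Fin (k+1))) :
    thickness (p ∘ π) = thickness p := by
  unfold thickness
  rw [minalt_comp p π, longEdge_comp p π]

lemma xi_small {k : ℕ} {m : ℕ} (p : Fin (k+1) → E m) (hk : k ≠ 0) (hnd : 0 < thickness p)
    {ξ₀ η : ℝ} (hξ : ξ₀ ≤ (η * thickness p / 2) ^ 2) (hη : η ^ 2 ≤ 1) :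
    ξ₀ ≤ η ^ 2 * thickness p ^ 2 / 4 ∧ ξ₀ ≤ 1/4 := by
  have hT1 := thickness_le_one p hk hnd
  have hT := hnd
  have h1 : (η * thickness p / 2) ^ 2 = η ^ 2 * thickness p ^ 2 / 4 := by ring
  rw [h1] at hξ
  refine ⟨hξ, hξ.trans ?_⟩
  nlinarith [sq_nonneg η, sq_nonneg (thickness p)]

lemma core {m k : ℕ} (hk : k ≠ 0) (p q : Fin (k+1) → E m) (ξ₀ η : ℝ)
    (hξ0 : 0 ≤ ξ₀) (hnd : 0 < thickness p)
    (h' : ∀ i j, |dist (p i) (p j) - dist (q i) (q j)| ≤ ξ₀ * longEdge p)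
    (hξ : ξ₀ ≤ (η * thickness p / 2) ^ 2) (hη : η ^ 2 ≤ 1) (x : Fin k → ℝ) :
    (1 - η ^ 2) * (Real.sqrt k * thickness p * longEdge p) * euclNorm x
      ≤ euclNorm ((vertMatrix q).mulVec x) := by
  obtain ⟨hξ', hξ14⟩ := xi_small p hk hnd hξ hη
  set T := thickness p with hTdef
  set L := longEdge p with hLdef
  have hT : 0 < T := hnd
  have hL : 0 < L := longEdge_pos p hk hnd
  have hk0 : (0:ℝ) < (k:ℝ) := by exact_mod_cast Nat.pos_of_ne_zero hk
  have hpert := pert p q ξ₀ hξ0 hξ14 hL.le h' x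
  have hfB := factB hk p hnd x
  set X := euclNorm x with hX
  have hX0 : 0 ≤ X := euclNorm_nonneg x
  have hPx : (k:ℝ) * T^2 * L^2 * X^2 ≤ euclNorm ((vertMatrix p).mulVec x) ^ 2 := by
    have h0 : 0 ≤ Real.sqrt k * T * L * X := by positivity
    have h2 := pow_le_pow_left₀ h0 hfB 2
    have h1 : (Real.sqrt k * T * L * X) ^ 2 = (k:ℝ) * T^2 * L^2 * X^2 := by
      rw [mul_pow, mul_pow, mul_pow, Real.sq_sqrt hk0.le]
    rw [← h1]
    exact h2
  have hq2 : (1 - η^2) * ((k:ℝ) * T^2 * L^2 * X^2)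
      ≤ euclNorm ((vertMatrix q).mulVec x) ^ 2 := by
    have hc : 0 ≤ (η^2 * T^2 - 4 * ξ₀) * ((k:ℝ) * L^2 * X^2) :=
      mul_nonneg (by linarith) (by positivity)
    nlinarith [hpert, hPx]
  set a := (1 - η^2) * (Real.sqrt k * T * L) * X with ha
  have ha0 : 0 ≤ a := by
    have : (0:ℝ) ≤ 1 - η^2 := by linarith
    positivity
  have hsq : a ^ 2 ≤ euclNorm ((vertMatrix q).mulVec x) ^ 2 := by
    have e1 : a ^ 2 = (1 - η^2)^2 * ((k:ℝ) * T^2 * L^2 * X^2) := by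
      rw [ha, mul_pow, mul_pow, mul_pow, mul_pow, Real.sq_sqrt hk0.le]
      ring
    have e2 : 0 ≤ (1 - η^2) * η^2 * ((k:ℝ) * T^2 * L^2 * X^2) :=
      mul_nonneg (mul_nonneg (by linarith) (sq_nonneg _)) (by positivity)
    nlinarith [hq2]
  have := Real.sqrt_le_sqrt hsq
  rwa [Real.sqrt_sq ha0, Real.sqrt_sq (euclNorm_nonneg _)] at this

lemma alt_q {m k : ℕ} (hk : k ≠ 0) (p q : Fin (k+1) → E m) (ξ₀ η : ℝ)
    (hξ0 : 0 ≤ ξ₀) (hnd : 0 < thickness p)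
    (h' : ∀ i j, |dist (p i) (p j) - dist (q i) (q j)| ≤ ξ₀ * longEdge p)
    (hξ : ξ₀ ≤ (η * thickness p / 2) ^ 2) (hη : η ^ 2 ≤ 1) (i : Fin (k+1)) :
    (1 - η ^ 2) * (Real.sqrt k * thickness p * longEdge p) ≤ altitude q i := by
  obtain ⟨π, hπ0, i', hi'⟩ : ∃ π : Equiv.Perm (Fin (k+1)),
      π 0 ≠ i ∧ ∃ i' : Fin k, π i'.succ = i := by
    by_cases h0 : i = 0
    · refine ⟨Equiv.swap 0 ⟨1, one_lt_card hk⟩, ?_, ⟨0, Nat.pos_of_ne_zero hk⟩, ?_⟩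
      · rw [Equiv.swap_apply_left, h0]
        intro hc
        have : (1:ℕ) = 0 := congrArg Fin.val hc
        omega
      · have hs : (⟨0, Nat.pos_of_ne_zero hk⟩ : Fin k).succ = ⟨1, one_lt_card hk⟩ := rfl
        rw [hs, Equiv.swap_apply_right, h0]
    · obtain ⟨i', hi'⟩ := Fin.exists_succ_eq.mpr h0
      exact ⟨Equiv.refl _, fun hc => h0 hc.symm, i', hi'⟩
  set T := thickness p with hTdef
  set L := longEdge p with hLdef
  have hT : 0 < T := hnd
  have hL : 0 < L := longEdge_pos p hk hnd
  set B := (1 - η ^ 2) * (Real.sqrt k * T * L) with hB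
  have hB0 : 0 ≤ B := by
    have h1 : (0:ℝ) ≤ 1 - η^2 := by linarith
    have h2 : (0:ℝ) < Real.sqrt k := Real.sqrt_pos.mpr (by exact_mod_cast Nat.pos_of_ne_zero hk)
    positivity
  have hcore : ∀ x : Fin k → ℝ,
      B * euclNorm x ≤ euclNorm ((vertMatrix (q ∘ π)).mulVec x) := by
    intro x
    have hnd' : 0 < thickness (p ∘ π) := by rw [thickness_comp]; exact hnd
    have h'' : ∀ a b, |dist ((p ∘ π) a) ((p ∘ π) b) - dist ((q ∘ π) a) ((q ∘ π) b)|
        ≤ ξ₀ * longEdge (p ∘ π) := by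
      intro a b
      rw [longEdge_comp]
      exact h' (π a) (π b)
    have hξ'' : ξ₀ ≤ (η * thickness (p ∘ π) / 2) ^ 2 := by rw [thickness_comp]; exact hξ
    have := core hk (p ∘ π) (q ∘ π) ξ₀ η hξ0 hnd' h'' hξ'' hη x
    rwa [thickness_comp, longEdge_comp] at this
  set S := (↑(affineSpan ℝ (q '' {j | j ≠ i})) : Set (E m)) with hS
  have hSne : S.Nonempty := ⟨q (π 0), subset_affineSpan ℝ _ ⟨π 0, hπ0, rfl⟩⟩
  rw [altitude]
  by_contra hlt
  push_neg at hlt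
  obtain ⟨y, hy, hdy⟩ := (infDist_lt_iff hSne).mp hlt
  -- extract affine weights
  rw [hS, Set.image_eq_range] at hy
  obtain ⟨w, hw1, hwy⟩ := eq_affineCombination_of_mem_affineSpan_of_fintype hy
  set W : Fin (k+1) → ℝ := fun j => if h : j = i then 0 else w ⟨j, h⟩ with hW
  have hWi : W i = 0 := dif_pos rfl
  have hWsub : ∀ j : ↥{j : Fin (k+1) | j ≠ i}, W (j : Fin (k+1)) = w j := by
    intro j
    obtain ⟨j, hj⟩ := j
    rw [hW]
    simp only [dif_neg (hj : j ≠ i)]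
  have hWsum : ∑ j, W j = 1 := by
    have e1 := Finset.sum_erase_add Finset.univ W (Finset.mem_univ i)
    rw [hWi, add_zero] at e1
    rw [← e1, Finset.sum_subtype (p := (· ∈ {j : Fin (k+1) | j ≠ i}))
      (Finset.univ.erase i) (by intro j; simp) W]
    rw [Finset.sum_congr rfl fun j _ => hWsub j]
    exact hw1
  have hy_eq : y = ∑ j, W j • q j := by
    rw [hwy, Finset.affineCombination_eq_linear_combination _ _ _ hw1]
    have e1 := Finset.sum_erase_add Finset.univ (fun j => W j • q j) (Finset.mem_univ i)
    simp only [hWi, zero_smul, add_zero] at e1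
    rw [← e1, Finset.sum_subtype (p := (· ∈ {j : Fin (k+1) | j ≠ i}))
      (Finset.univ.erase i) (by intro j; simp) (fun j => W j • q j)]
    exact (Finset.sum_congr rfl fun j _ => by rw [hWsub j]).symm
  set c : Fin (k+1) → ℝ := fun j => (if j = i then 1 else 0) - W j with hc
  have hci : c i = 1 := by rw [hc]; simp [hWi]
  have hcsum : ∑ j, c j = 0 := by
    rw [hc, Finset.sum_sub_distrib, Finset.sum_ite_eq' Finset.univ i (fun _ => (1:ℝ)),
      if_pos (Finset.mem_univ i), hWsum, sub_self]
  set x : Fin k → ℝ := fun l => c (π l.succ) with hx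
  have hya : ∀ a, y a = ∑ j, W j * q j a := by
    intro a
    have h1 : (∑ j, W j • q j) a = ∑ j, (W j • q j) a := by
      rw [WithLp.ofLp_sum, Finset.sum_apply]
    rw [hy_eq, h1]
    rfl
  have hkey : ∀ a, q i a - y a = ((vertMatrix (q ∘ π)).mulVec x) a := by
    intro a
    have e1 : q i a = ∑ j, (if j = i then (1:ℝ) else 0) * q j a := by
      simp only [ite_mul, one_mul, zero_mul]
      rw [Finset.sum_ite_eq' Finset.univ i (fun j => q j a), if_pos (Finset.mem_univ i)]
    have e2 : q i a - y a = ∑ j, c j * q j a := by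
      rw [e1, hya, ← Finset.sum_sub_distrib]
      exact Finset.sum_congr rfl fun j _ => by rw [hc]; ring
    have e3 : ∑ j, c j * q j a = ∑ j, c j * (q j a - q (π 0) a) := by
      rw [Finset.sum_congr rfl fun j _ =>
        (by ring : c j * (q j a - q (π 0) a) = c j * q j a - c j * q (π 0) a),
        Finset.sum_sub_distrib, ← Finset.sum_mul, hcsum, zero_mul, sub_zero]
    have e4 : ∑ j, c j * (q j a - q (π 0) a)
        = ∑ j, c (π j) * (q (π j) a - q (π 0) a) :=
      (Equiv.sum_comp π (fun j => c j * (q j a - q (π 0) a))).symm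
    rw [e2, e3, e4, Fin.sum_univ_succ, sub_self, mul_zero, zero_add]
    rw [Matrix.mulVec, dotProduct]
    exact Finset.sum_congr rfl fun l _ => by
      simp only [vertMatrix, Function.comp_apply, hx]
      ring
  have hdist : dist (q i) y = euclNorm ((vertMatrix (q ∘ π)).mulVec x) := by
    rw [dist_E]
    congr 1
    exact funext hkey
  have hx1 : (1:ℝ) ≤ euclNorm x := by
    have hxi' : x i' = 1 := by rw [hx]; simp only [hi']; exact hci
    have h1 : (1:ℝ) ≤ ∑ l, x l ^ 2 := by
      have := Finset.single_le_sum (f := fun l => x l ^ 2)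
        (fun l _ => sq_nonneg _) (Finset.mem_univ i')
      simpa [hxi'] using this
    have := Real.sqrt_le_sqrt h1
    rwa [Real.sqrt_one] at this
  have hfinal : B ≤ dist (q i) y := by
    calc B = B * 1 := (mul_one B).symm
      _ ≤ B * euclNorm x := mul_le_mul_of_nonneg_left hx1 hB0
      _ ≤ euclNorm ((vertMatrix (q ∘ π)).mulVec x) := hcore x
      _ = dist (q i) y := hdist.symm
  exact absurd hdy (not_lt.mpr hfinal)

lemma smallSV_empty {m : ℕ} (P : Matrix (Fin m) (Fin 0) ℝ) : smallSV P = 0 := by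
  haveI : IsEmpty {x : Fin 0 → ℝ // euclNorm x = 1} := by
    refine ⟨fun z => ?_⟩
    obtain ⟨x, hx⟩ := z
    rw [euclNorm] at hx
    simp at hx
  rw [smallSV, iInf, Set.range_eq_empty, Real.sInf_empty]

lemma thickness_nonneg {m k : ℕ} (p : Fin (k+1) → E m) : 0 ≤ thickness p := by
  rw [thickness]
  split
  · norm_num
  · exact div_nonneg (minalt_nonneg p)
      (mul_nonneg (Nat.cast_nonneg k) (longEdge_nonneg p))

set_option maxHeartbeats 1000000 in
theorem stmt3' {m k : ℕ} (p q : Fin (k+1) → E m) (ξ₀ η : ℝ)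
    (hξ0 : 0 ≤ ξ₀) (hnd : 0 < thickness p)
    (h : ∀ i j : Fin (k+1), i < j →
      |dist (p i) (p j) - dist (q i) (q j)| ≤ ξ₀ * longEdge p)
    (hξ : ξ₀ ≤ (η * thickness p / 2) ^ 2) (hη : η ^ 2 ≤ 1) :
    smallSV (vertMatrix q) ≥ (1 - η ^ 2) * smallSV (vertMatrix p) ∧
    thickness q * longEdge q ≥ (1 - η ^ 2) * thickness p * longEdge p / Real.sqrt k ∧
    thickness q ≥ (4 / (5 * Real.sqrt k)) * (1 - η ^ 2) * thickness p := by
  by_cases hk : k = 0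
  · subst hk
    have hs0 : Real.sqrt ((0:ℕ):ℝ) = 0 := by simp
    refine ⟨?_, ?_, ?_⟩
    · rw [ge_iff_le, smallSV_empty, smallSV_empty, mul_zero]
    · rw [ge_iff_le, hs0, div_zero]
      have hq : thickness q = 1 := by rw [thickness, if_pos rfl]
      rw [hq, one_mul]
      exact longEdge_nonneg q
    · rw [ge_iff_le, hs0, mul_zero, div_zero, zero_mul, zero_mul]
      exact thickness_nonneg q
  -- main case
  have hsym : ∀ i j, |dist (p i) (p j) - dist (q i) (q j)| ≤ ξ₀ * longEdge p := by
    intro i j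
    rcases lt_trichotomy i j with hij | rfl | hij
    · exact h i j hij
    · simpa using mul_nonneg hξ0 (longEdge_nonneg p)
    · rw [dist_comm (p i) (p j), dist_comm (q i) (q j)]
      exact h j i hij
  obtain ⟨hξ', hξ14⟩ := xi_small p hk hnd hξ hη
  set T := thickness p with hTdef
  set L := longEdge p with hLdef
  have hT : 0 < T := hnd
  have hL : 0 < L := longEdge_pos p hk hnd
  have hk0 : (0:ℝ) < (k:ℝ) := by exact_mod_cast Nat.pos_of_ne_zero hk
  have hsk : 0 < Real.sqrt k := Real.sqrt_pos.mpr hk0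
  have hkk : ((k:ℕ):ℝ) = Real.sqrt k * Real.sqrt k := (Real.mul_self_sqrt hk0.le).symm
  have h1η : (0:ℝ) ≤ 1 - η^2 := by linarith
  -- claim 1
  have claim1 : smallSV (vertMatrix q) ≥ (1 - η ^ 2) * smallSV (vertMatrix p) := by
    haveI : Nonempty {x : Fin k → ℝ // euclNorm x = 1} := by
      refine ⟨⟨fun j => if j = ⟨0, Nat.pos_of_ne_zero hk⟩ then 1 else 0, ?_⟩⟩
      rw [euclNorm]
      have : ∀ j : Fin k, ((if j = ⟨0, Nat.pos_of_ne_zero hk⟩ then (1:ℝ) else 0))^2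
          = if j = ⟨0, Nat.pos_of_ne_zero hk⟩ then 1 else 0 := by
        intro j; split <;> norm_num
      rw [Finset.sum_congr rfl fun j _ => this j,
        Finset.sum_ite_eq' Finset.univ _ (fun _ => (1:ℝ)), if_pos (Finset.mem_univ _),
        Real.sqrt_one]
    rw [ge_iff_le]
    refine le_ciInf ?_
    rintro ⟨x, hx⟩
    set s := smallSV (vertMatrix p) with hsdef
    have hs_le : s ≤ euclNorm ((vertMatrix p).mulVec x) := by
      have hb : BddBelow (Set.range (fun z : {x : Fin k → ℝ // euclNorm x = 1} =>
          euclNorm ((vertMatrix p).mulVec z.val))) := by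
        refine ⟨0, ?_⟩
        rintro r ⟨z, rfl⟩
        exact euclNorm_nonneg _
      exact ciInf_le hb ⟨x, hx⟩
    have hsB : Real.sqrt k * T * L ≤ s := by
      refine le_ciInf fun z => ?_
      have := factB hk p hnd z.val
      rwa [z.prop, mul_one] at this
    have hs0 : 0 ≤ s := le_trans (by positivity) hsB
    have hpert := pert p q ξ₀ hξ0 hξ14 hL.le hsym x
    rw [hx, one_pow, mul_one] at hpert
    have hPge : s^2 ≤ euclNorm ((vertMatrix p).mulVec x)^2 := pow_le_pow_left₀ hs0 hs_le 2
    have hktl : (k:ℝ)*T^2*L^2 ≤ s^2 := by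
      have := pow_le_pow_left₀ (by positivity) hsB 2
      calc (k:ℝ)*T^2*L^2 = (Real.sqrt k * T * L)^2 := by
            rw [mul_pow, mul_pow, Real.sq_sqrt hk0.le]
        _ ≤ s^2 := this
    have h1 : 4*(k:ℝ)*ξ₀*L^2 ≤ η^2 * s^2 := by
      have ha : (4*ξ₀) * ((k:ℝ)*L^2) ≤ (η^2*T^2) * ((k:ℝ)*L^2) :=
        mul_le_mul_of_nonneg_right (by linarith) (by positivity)
      have hb : η^2 * ((k:ℝ)*T^2*L^2) ≤ η^2 * s^2 :=
        mul_le_mul_of_nonneg_left hktl (sq_nonneg η)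
      nlinarith [ha, hb]
    have h2 : ((1-η^2)*s)^2 ≤ euclNorm ((vertMatrix q).mulVec x)^2 := by
      have e2 : 0 ≤ (1-η^2) * η^2 * s^2 :=
        mul_nonneg (mul_nonneg h1η (sq_nonneg η)) (sq_nonneg s)
      nlinarith [hpert, hPge, h1]
    have := Real.sqrt_le_sqrt h2
    rwa [Real.sqrt_sq (by positivity), Real.sqrt_sq (euclNorm_nonneg _)] at this
  refine ⟨claim1, ?_⟩
  -- altitude bound
  set B := (1 - η ^ 2) * (Real.sqrt k * T * L) with hB
  have hminq : ∀ i, B ≤ altitude q i := alt_q hk p q ξ₀ η hξ0 hnd hsym hξ hη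
  have hminq' : B ≤ ⨅ i, altitude q i := le_ciInf hminq
  have hLq_le : longEdge q ≤ (5/4) * L := by
    refine longEdge_le q fun i j => ?_
    have h1 := (abs_le.mp (hsym i j)).1
    have h2 : dist (p i) (p j) ≤ L := dist_le_longEdge p i j
    have h3 : ξ₀ * L ≤ (1/4) * L := mul_le_mul_of_nonneg_right hξ14 hL.le
    linarith
  by_cases hη1 : 1 - η^2 = 0
  · constructor
    · rw [ge_iff_le, show (1 - η^2) * T * L / Real.sqrt k = 0 by
        rw [hη1, zero_mul, zero_mul, zero_div]]
      exact mul_nonneg (thickness_nonneg q) (longEdge_nonneg q)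
    · rw [ge_iff_le, show 4 / (5 * Real.sqrt k) * (1 - η^2) * T = 0 by rw [hη1]; ring]
      exact thickness_nonneg q
  have hη2 : 0 < 1 - η^2 := lt_of_le_of_ne h1η (Ne.symm hη1)
  have hB0 : 0 < B := by rw [hB]; positivity
  have hLq_pos : 0 < longEdge q := by
    set j1 : Fin (k+1) := ⟨1, one_lt_card hk⟩ with hj1
    have hne : j1 ≠ 0 := by
      intro hc; have : (1:ℕ) = 0 := congrArg Fin.val hc; omega
    have h1 : altitude q 0 ≤ dist (q 0) (q j1) :=
      infDist_le_dist_of_mem (subset_affineSpan ℝ _ ⟨j1, hne, rfl⟩)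
    have h2 : dist (q 0) (q j1) ≤ longEdge q := dist_le_longEdge q 0 j1
    have := hminq 0
    linarith
  have hthq : thickness q = (⨅ i, altitude q i) / ((k:ℝ) * longEdge q) := by
    rw [thickness, if_neg hk]
  constructor
  · -- claim 2
    have e0 : thickness q * longEdge q = (⨅ i, altitude q i) / (k:ℝ) := by
      rw [hthq, div_mul_eq_mul_div, mul_comm (k:ℝ) (longEdge q), ← div_div,
        mul_div_assoc, div_self hLq_pos.ne', mul_one]
    have e1 : (1 - η^2) * T * L / Real.sqrt k = B / (k:ℝ) := by
      rw [div_eq_div_iff hsk.ne' hk0.ne', hB]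
      linear_combination ((1-η^2)*T*L) * hkk
    rw [ge_iff_le, e0, e1]
    gcongr
  · -- claim 3
    have e3 : 4 / (5 * Real.sqrt k) * (1 - η^2) * T = B / ((k:ℝ) * ((5/4) * L)) := by
      have e4 : 4 / (5 * Real.sqrt k) * (1 - η^2) * T
          = (4 * ((1-η^2) * T)) / (5 * Real.sqrt k) := by ring
      rw [e4, div_eq_div_iff (by positivity) (by positivity), hB]
      linear_combination (5*(1-η^2)*T*L) * hkk
    rw [ge_iff_le, e3, hthq]
    gcongr
    all_goals first
      | exact le_trans hB0.le hminq'
      | exact hLq_le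
      | exact hminq'

/-- Thickness under distortion. -/
theorem stmt3 {m k : ℕ} (p q : Fin (k+1) → E m) (ξ₀ η : ℝ)
    (hξ0 : 0 ≤ ξ₀) (hnd : 0 < thickness p)
    (h : ∀ i j : Fin (k+1), i < j →
      |dist (p i) (p j) - dist (q i) (q j)| ≤ ξ₀ * longEdge p)
    (hξ : ξ₀ ≤ (η * thickness p / 2) ^ 2) (hη : η ^ 2 ≤ 1) :
    smallSV (vertMatrix q) ≥ (1 - η ^ 2) * smallSV (vertMatrix p) ∧
    thickness q * longEdge q ≥ (1 - η ^ 2) * thickness p * longEdge p / Real.sqrt k ∧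
    thickness q ≥ (4 / (5 * Real.sqrt k)) * (1 - η ^ 2) * thickness p := by
  exact stmt3' p q ξ₀ η hξ0 hnd h hξ hη
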